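/- Let M₁ and M₂ be two matroids on the same finite ground set with nonnegative weights. The greedy algorithm that processes elements in decreasing weight order and adds an element whenever the result remains independent in both matroids outputs a common independent set whose weight is at least half of the maximum weight of any common independent set. -/

import Mathlib

open Classical in
/-- The greedy algorithm: process the elements of the list in order, adding an element
whenever the result still satisfies the predicate `P`. -/
noncomputable def greedy {E : Type*} [DecidableEq E] (P : Finset E → Prop) :
    List E → Finset E → Finset E
  | [], S => S
  | e :: l, S => if P (insert e S) then greedy P l (insert e S) else greedy P l S

section lemmas
variable {E : Type*} [DecidableEq E] (P : Finset E → Prop)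

open Classical in
lemma greedy_cons (e : E) (l : List E) (S : Finset E) :
    greedy P (e :: l) S =
      if P (insert e S) then greedy P l (insert e S) else greedy P l S := rfl

lemma greedy_nil (S : Finset E) : greedy P [] S = S := rfl

lemma subset_greedy : ∀ (l : List E) (S : Finset E), S ⊆ greedy P l S
  | [], S => Finset.Subset.refl S
  | e :: l, S => by
      rw [greedy_cons]
      split
      · exact (Finset.subset_insert e S).trans (subset_greedy l (insert e S))
      · exact subset_greedy l S

lemma greedy_P : ∀ (l : List E) (S : Finset E), P S → P (greedy P l S)
  | [], S, h => h
  | e :: l, S, h => by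
      rw [greedy_cons]
      split
      · exact greedy_P l _ ‹_›
      · exact greedy_P l _ h

lemma greedy_append : ∀ (l₁ l₂ : List E) (S : Finset E),
    greedy P (l₁ ++ l₂) S = greedy P l₂ (greedy P l₁ S)
  | [], l₂, S => rfl
  | a :: l₁, l₂, S => by
      rw [List.cons_append, greedy_cons, greedy_cons]
      split <;> exact greedy_append l₁ l₂ _

lemma greedy_maximal (hdown : ∀ s t : Finset E, s ⊆ t → P t → P s) :
    ∀ (l : List E) (S : Finset E) (e : E), e ∈ l → e ∉ greedy P l S →
      ¬ P (insert e (greedy P l S))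
  | [], S, e, he, _ => absurd he List.not_mem_nil
  | a :: l, S, e, he, hne => by
      rw [greedy_cons] at hne ⊢
      by_cases h : P (insert a S)
      · rw [if_pos h] at hne ⊢
        rcases List.mem_cons.mp he with rfl | he'
        · exact absurd (subset_greedy P l (insert e S) (Finset.mem_insert_self e S)) hne
        · exact greedy_maximal hdown l _ e he' hne
      · rw [if_neg h] at hne ⊢
        rcases List.mem_cons.mp he with rfl | he'
        · intro hP
          exact h (hdown _ _ (Finset.insert_subset_insert _ (subset_greedy P l S)) hP)
        · exact greedy_maximal hdown l _ e he' hne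

end lemmas
lemma card_le_two_mul {E : Type*} [DecidableEq E] {Indep₁ Indep₂ : Finset E → Prop}
    (h_sub₁ : ∀ s t : Finset E, s ⊆ t → Indep₁ t → Indep₁ s)
    (h_sub₂ : ∀ s t : Finset E, s ⊆ t → Indep₂ t → Indep₂ s)
    (h_exch₁ : ∀ s t : Finset E, Indep₁ s → Indep₁ t → s.card < t.card →
      ∃ e ∈ t, e ∉ s ∧ Indep₁ (insert e s))
    (h_exch₂ : ∀ s t : Finset E, Indep₂ s → Indep₂ t → s.card < t.card →
      ∃ e ∈ t, e ∉ s ∧ Indep₂ (insert e s))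
    (T S : Finset E) (hT1 : Indep₁ T) (hT2 : Indep₂ T)
    (hS1 : Indep₁ S) (hS2 : Indep₂ S)
    (hmax : ∀ e ∈ S, e ∉ T → ¬ (Indep₁ (insert e T) ∧ Indep₂ (insert e T))) :
    S.card ≤ 2 * T.card := by
  classical
  set A := S.filter (fun e => e ∈ T ∨ ¬ Indep₁ (insert e T)) with hA
  set B := S.filter (fun e => ¬ Indep₂ (insert e T)) with hB
  have hSsub : S ⊆ A ∪ B := by
    intro e he
    by_cases heT : e ∈ T
    · exact Finset.mem_union_left _ (Finset.mem_filter.mpr ⟨he, Or.inl heT⟩)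
    · rcases not_and_or.mp (hmax e he heT) with h | h
      · exact Finset.mem_union_left _ (Finset.mem_filter.mpr ⟨he, Or.inr h⟩)
      · exact Finset.mem_union_right _ (Finset.mem_filter.mpr ⟨he, h⟩)
  have hAcard : A.card ≤ T.card := by
    by_contra hlt
    push_neg at hlt
    obtain ⟨e, heA, heT, hind⟩ :=
      h_exch₁ T A hT1 (h_sub₁ A S (Finset.filter_subset _ _) hS1) hlt
    rcases (Finset.mem_filter.mp heA).2 with h | h
    · exact heT h
    · exact h hind
  have hBcard : B.card ≤ T.card := by
    by_contra hlt
    push_neg at hlt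
    obtain ⟨e, heB, heT, hind⟩ :=
      h_exch₂ T B hT2 (h_sub₂ B S (Finset.filter_subset _ _) hS2) hlt
    exact (Finset.mem_filter.mp heB).2 hind
  calc S.card ≤ (A ∪ B).card := Finset.card_le_card hSsub
    _ ≤ A.card + B.card := Finset.card_union_le _ _
    _ ≤ 2 * T.card := by omega

lemma main_aux {E : Type*} [DecidableEq E] (Indep₁ Indep₂ : Finset E → Prop)
    (h_empty₁ : Indep₁ ∅) (h_empty₂ : Indep₂ ∅)
    (h_sub₁ : ∀ s t : Finset E, s ⊆ t → Indep₁ t → Indep₁ s)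
    (h_sub₂ : ∀ s t : Finset E, s ⊆ t → Indep₂ t → Indep₂ s)
    (h_exch₁ : ∀ s t : Finset E, Indep₁ s → Indep₁ t → s.card < t.card →
      ∃ e ∈ t, e ∉ s ∧ Indep₁ (insert e s))
    (h_exch₂ : ∀ s t : Finset E, Indep₂ s → Indep₂ t → s.card < t.card →
      ∃ e ∈ t, e ∉ s ∧ Indep₂ (insert e s)) :
    ∀ (l : List E) (w : E → ℝ), l.Nodup → l.Pairwise (fun e f => w f ≤ w e) →
      (∀ e ∈ l, 0 ≤ w e) →
      ∀ S : Finset E, S ⊆ l.toFinset → Indep₁ S → Indep₂ S →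
        ∑ e ∈ S, w e ≤ 2 * ∑ e ∈ greedy (fun s => Indep₁ s ∧ Indep₂ s) l ∅, w e := by
  intro l
  induction l using List.reverseRecOn with
  | nil =>
      intro w _ _ _ S hS _ _
      have : S = ∅ := Finset.subset_empty.mp (by simpa using hS)
      subst this
      simp [greedy_nil]
  | append_singleton l' f ih =>
      intro w hnd hsort hpos S hSsub hS1 hS2
      set P := fun s : Finset E => Indep₁ s ∧ Indep₂ s with hPdef
      have hdown : ∀ s t : Finset E, s ⊆ t → P t → P s :=
        fun s t hst ht => ⟨h_sub₁ s t hst ht.1, h_sub₂ s t hst ht.2⟩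
      set G := greedy P (l' ++ [f]) ∅ with hGdef
      have hGP : P G := greedy_P P _ _ ⟨h_empty₁, h_empty₂⟩
      -- cardinality bound
      have hmax : ∀ e ∈ S, e ∉ G → ¬ (Indep₁ (insert e G) ∧ Indep₂ (insert e G)) := by
        intro e he hneG
        have hel : e ∈ l' ++ [f] := List.mem_toFinset.mp (hSsub he)
        exact greedy_maximal P hdown _ _ e hel hneG
      have hcard : S.card ≤ 2 * G.card :=
        card_le_two_mul h_sub₁ h_sub₂ h_exch₁ h_exch₂ G S hGP.1 hGP.2 hS1 hS2 hmax
      -- sortedness facts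
      have hsort' : l'.Pairwise (fun e f => w f ≤ w e) := (List.pairwise_append.mp hsort).1
      have hfl' : ∀ e ∈ l', w f ≤ w e := by
        intro e he
        exact (List.pairwise_append.mp hsort).2.2 e he f (List.mem_singleton_self f)
      have hf0 : 0 ≤ w f := hpos f (by simp)
      set w' := fun e => w e - w f with hw'def
      have hw'0 : ∀ e ∈ l', 0 ≤ w' e := fun e he => sub_nonneg.mpr (hfl' e he)
      have hsortw' : l'.Pairwise (fun e f => w' f ≤ w' e) :=
        hsort'.imp fun h => sub_le_sub_right h (w f)
      have hnd' : l'.Nodup := (List.nodup_append.mp hnd).1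
      -- the restricted optimum
      set S' := S.erase f with hS'def
      have hS'sub : S' ⊆ l'.toFinset := by
        intro e he
        have he1 : e ∈ S := Finset.mem_of_mem_erase he
        have he2 : e ≠ f := Finset.ne_of_mem_erase he
        have := hSsub he1
        simp only [List.toFinset_append, Finset.mem_union, List.toFinset_cons,
          List.toFinset_nil, Finset.notMem_empty, or_false, Finset.mem_insert,
          Finset.mem_singleton] at this
        rcases this with h | h
        · exact h
        · exact absurd h he2
      have hS'1 : Indep₁ S' := h_sub₁ S' S (Finset.erase_subset f S) hS1
      have hS'2 : Indep₂ S' := h_sub₂ S' S (Finset.erase_subset f S) hS2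
      have IH := ih w' hnd' hsortw' hw'0 S' hS'sub hS'1 hS'2
      -- relate greedy on l'++[f] to greedy on l'
      set G0 := greedy P l' ∅ with hG0def
      have hGsplit : G = greedy P [f] G0 := greedy_append P l' [f] ∅
      -- sum manipulations
      have hw'f : w' f = 0 := by simp [hw'def]
      have sumS'eq : ∑ e ∈ S', w' e = ∑ e ∈ S, w' e :=
        Finset.sum_erase S hw'f
      have sumGw' : ∑ e ∈ G, w' e = ∑ e ∈ G0, w' e := by
        rw [hGsplit, greedy_cons, greedy_nil, greedy_nil]
        split
        · exact Finset.sum_insert_of_eq_zero_if_notMem (fun _ => hw'f)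
        · rfl
      have expand : ∀ T : Finset E, ∑ e ∈ T, w e = ∑ e ∈ T, w' e + T.card * w f := by
        intro T
        simp only [hw'def, Finset.sum_sub_distrib, Finset.sum_const, nsmul_eq_mul]
        ring
      have hcardR : (S.card : ℝ) * w f ≤ 2 * (G.card * w f) := by
        have h1 : (S.card : ℝ) ≤ 2 * G.card := by exact_mod_cast hcard
        nlinarith
      have IH2 : ∑ e ∈ S, w' e ≤ 2 * ∑ e ∈ G, w' e := by
        rw [← sumS'eq, sumGw']
        exact IH
      rw [expand S, expand G]
      linarith

/-- Greedy for the intersection of two matroids `Indep₁`, `Indep₂` on the same ground set,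
processing elements by decreasing weight: the output is a common independent set whose
weight is at least half the weight of any common independent set. -/
theorem stmt5 {E : Type*} [DecidableEq E] (Indep₁ Indep₂ : Finset E → Prop)
    (w : E → ℝ) (hw : ∀ e, 0 ≤ w e)
    (h_empty₁ : Indep₁ ∅) (h_empty₂ : Indep₂ ∅)
    (h_sub₁ : ∀ s t : Finset E, s ⊆ t → Indep₁ t → Indep₁ s)
    (h_sub₂ : ∀ s t : Finset E, s ⊆ t → Indep₂ t → Indep₂ s)
    (h_exch₁ : ∀ s t : Finset E, Indep₁ s → Indep₁ t → s.card < t.card →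
      ∃ e ∈ t, e ∉ s ∧ Indep₁ (insert e s))
    (h_exch₂ : ∀ s t : Finset E, Indep₂ s → Indep₂ t → s.card < t.card →
      ∃ e ∈ t, e ∉ s ∧ Indep₂ (insert e s))
    (l : List E) (hl : l.Nodup) (hsorted : l.Pairwise (fun e f => w f ≤ w e)) :
    (Indep₁ (greedy (fun s => Indep₁ s ∧ Indep₂ s) l ∅) ∧
      Indep₂ (greedy (fun s => Indep₁ s ∧ Indep₂ s) l ∅)) ∧
      ∀ s : Finset E, s ⊆ l.toFinset → Indep₁ s → Indep₂ s →
        ∑ e ∈ s, w e ≤ 2 * ∑ e ∈ greedy (fun s => Indep₁ s ∧ Indep₂ s) l ∅, w e := by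
  constructor
  · exact greedy_P (fun s => Indep₁ s ∧ Indep₂ s) l ∅ ⟨h_empty₁, h_empty₂⟩
  · intro s hs hs1 hs2
    exact main_aux Indep₁ Indep₂ h_empty₁ h_empty₂ h_sub₁ h_sub₂ h_exch₁ h_exch₂
      l w hl hsorted (fun e _ => hw e) s hs hs1 hs2
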